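/- The expected α-optimal q-function satisfies the fixed-point equation q(s,a) = r(s,a) + γ(1-α)Σ_{s'}P(s'|s,a) max_{a'} q(s',a') + γα Σ_{s',a'} P(s'|s,a) π₀(a'|s') q(s',a'), and the operator T^{Eq}_α defined by the right-hand side is a γ-contraction in the sup norm on ℝ^{S×A}. -/

import Mathlib

open Finset

/-- One-step return for state `s`, action `a`, value `v`. -/
noncomputable def qOf {S A : Type*} [Fintype S] (γ : ℝ)
    (r : S → A → ℝ) (P : S → A → S → ℝ) (v : S → ℝ) (s : S) (a : A) : ℝ :=
  r s a + γ * ∑ s', P s a s' * v s'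

/-- Fixed-policy Bellman operator. -/
noncomputable def Tpol {S A : Type*} [Fintype S] [Fintype A] (γ : ℝ)
    (r : S → A → ℝ) (P : S → A → S → ℝ) (π : S → A → ℝ) (v : S → ℝ) : S → ℝ :=
  fun s => ∑ a, π s a * qOf γ r P v s a

/-- Optimal Bellman operator. -/
noncomputable def Topt {S A : Type*} [Fintype S] [Fintype A] (γ : ℝ)
    (r : S → A → ℝ) (P : S → A → S → ℝ) (v : S → ℝ) : S → ℝ :=
  fun s => ⨆ a : A, qOf γ r P v s a
/-- The expected α-optimal Bellman q-operator `T^{Eq}_α`. -/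
noncomputable def TEq {S A : Type*} [Fintype S] [Fintype A] (γ α : ℝ)
    (r : S → A → ℝ) (P : S → A → S → ℝ) (π0 : S → A → ℝ)
    (q : S → A → ℝ) : S → A → ℝ := fun s a =>
  r s a + γ * (1 - α) * ∑ s', P s a s' * (⨆ a' : A, q s' a')
        + γ * α * ∑ s', P s a s' * ∑ a', π0 s' a' * q s' a'

/-- The expected α-optimal q-function
`q^E(s,a) = r(s,a) + γ Σ_{s'} P(s'|s,a) v*_α(s')` satisfies the fixed-point
equation `T^{Eq}_α q^E = q^E`, and `T^{Eq}_α` is a γ-contraction in the sup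
norm on `ℝ^{S×A}`. -/

lemma sup_sub_le {A : Type*} [Fintype A] [Nonempty A] (f g : A → ℝ) (C : ℝ)
    (h : ∀ a, |f a - g a| ≤ C) : |(⨆ a, f a) - (⨆ a, g a)| ≤ C := by
  rw [abs_sub_le_iff]
  constructor <;>
  · rw [sub_le_iff_le_add]
    apply ciSup_le
    intro a
    have := h a
    rw [abs_sub_le_iff] at this
    have hle := le_ciSup (Finite.bddAbove_range _) a (f := fun a => (by exact g a : ℝ))
    have hle' := le_ciSup (Finite.bddAbove_range _) a (f := fun a => (by exact f a : ℝ))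
    nlinarith [this.1, this.2]

theorem TEq_fixed_point_and_contraction
    {S A : Type*} [Fintype S] [Fintype A] [Nonempty S] [Nonempty A]
    (γ α : ℝ) (hγ0 : 0 ≤ γ) (hγ1 : γ < 1) (hα : α ∈ Set.Icc (0 : ℝ) 1)
    (r : S → A → ℝ) (P : S → A → S → ℝ) (π0 : S → A → ℝ)
    (hP : ∀ s a, (∀ s', 0 ≤ P s a s') ∧ ∑ s', P s a s' = 1)
    (hπ0 : ∀ s, (∀ a, 0 ≤ π0 s a) ∧ ∑ a, π0 s a = 1)
    (vα : S → ℝ)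
    (hvα : (fun s => (1 - α) * Topt γ r P vα s + α * Tpol γ r P π0 vα s) = vα)
    (qE : S → A → ℝ)
    (hqE : ∀ s a, qE s a = r s a + γ * ∑ s', P s a s' * vα s') :
    TEq γ α r P π0 qE = qE ∧
      ∀ q1 q2 : S → A → ℝ,
        ‖TEq γ α r P π0 q1 - TEq γ α r P π0 q2‖ ≤ γ * ‖q1 - q2‖ := by

  constructor
  · funext s a
    have hsup : ∀ s', (⨆ a' : A, qE s' a') = Topt γ r P vα s' := by
      intro s'
      unfold Topt
      congr 1
      funext a'
      rw [hqE]; rfl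
    have hpol : ∀ s', (∑ a', π0 s' a' * qE s' a') = Tpol γ r P π0 vα s' := by
      intro s'
      unfold Tpol
      congr 1
      funext a'
      rw [hqE]; rfl
    have hv : ∀ s', (1 - α) * Topt γ r P vα s' + α * Tpol γ r P π0 vα s' = vα s' := by
      intro s'; exact congrFun hvα s'
    unfold TEq
    simp only [hsup, hpol]
    rw [hqE s a]
    have : ∀ s' , γ * (1 - α) * (P s a s' * Topt γ r P vα s')
        + γ * α * (P s a s' * Tpol γ r P π0 vα s')
        = γ * (P s a s' * vα s') := by
      intro s'; rw [← hv s']; ring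
    rw [mul_sum, mul_sum, mul_sum, add_assoc, ← Finset.sum_add_distrib]
    congr 1
    exact Finset.sum_congr rfl (fun s' _ => this s')
  · intro q1 q2
    have hC : (0:ℝ) ≤ ‖q1 - q2‖ := norm_nonneg _
    have hcomp : ∀ s' a', |q1 s' a' - q2 s' a'| ≤ ‖q1 - q2‖ := by
      intro s' a'
      have h1 : ‖(q1 - q2) s'‖ ≤ ‖q1 - q2‖ := norm_le_pi_norm (q1 - q2) s'
      have h2 : ‖((q1 - q2) s') a'‖ ≤ ‖(q1 - q2) s'‖ := norm_le_pi_norm ((q1 - q2) s') a'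
      simpa using h2.trans h1
    rw [pi_norm_le_iff_of_nonneg (by positivity)]
    intro s
    rw [pi_norm_le_iff_of_nonneg (by positivity)]
    intro a
    have h0 : α ∈ Set.Icc (0:ℝ) 1 := hα
    obtain ⟨hα0, hα1⟩ := h0
    obtain ⟨hPpos, hPsum⟩ := hP s a
    have hsupb : ∀ s', |(⨆ a' : A, q1 s' a') - (⨆ a' : A, q2 s' a')| ≤ ‖q1 - q2‖ :=
      fun s' => sup_sub_le _ _ _ (hcomp s')
    have hpolb : ∀ s', |(∑ a', π0 s' a' * q1 s' a') - (∑ a', π0 s' a' * q2 s' a')| ≤ ‖q1 - q2‖ := by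
      intro s'
      obtain ⟨hπpos, hπsum⟩ := hπ0 s'
      rw [← Finset.sum_sub_distrib]
      calc |∑ a', (π0 s' a' * q1 s' a' - π0 s' a' * q2 s' a')|
          ≤ ∑ a', |π0 s' a' * q1 s' a' - π0 s' a' * q2 s' a'| := Finset.abs_sum_le_sum_abs _ _
        _ ≤ ∑ a', π0 s' a' * ‖q1 - q2‖ := by
            apply Finset.sum_le_sum
            intro a' _
            rw [← mul_sub, abs_mul, abs_of_nonneg (hπpos a')]
            exact mul_le_mul_of_nonneg_left (hcomp s' a') (hπpos a')
        _ = ‖q1 - q2‖ := by rw [← Finset.sum_mul, hπsum, one_mul]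
    have key : |TEq γ α r P π0 q1 s a - TEq γ α r P π0 q2 s a| ≤ γ * ‖q1 - q2‖ := by
      unfold TEq
      have heq : (r s a + γ * (1 - α) * ∑ s', P s a s' * (⨆ a' : A, q1 s' a')
            + γ * α * ∑ s', P s a s' * ∑ a', π0 s' a' * q1 s' a')
          - (r s a + γ * (1 - α) * ∑ s', P s a s' * (⨆ a' : A, q2 s' a')
            + γ * α * ∑ s', P s a s' * ∑ a', π0 s' a' * q2 s' a')
          = γ * (1 - α) * ∑ s', P s a s' * ((⨆ a' : A, q1 s' a') - (⨆ a' : A, q2 s' a'))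
            + γ * α * ∑ s', P s a s' * ((∑ a', π0 s' a' * q1 s' a') - ∑ a', π0 s' a' * q2 s' a') := by
        simp only [mul_sub, Finset.sum_sub_distrib, Finset.mul_sum]
        ring
      rw [heq]
      have b1 : |γ * (1 - α) * ∑ s', P s a s' * ((⨆ a' : A, q1 s' a') - (⨆ a' : A, q2 s' a'))|
          ≤ γ * (1 - α) * ‖q1 - q2‖ := by
        rw [abs_mul, abs_of_nonneg (by nlinarith : (0:ℝ) ≤ γ * (1 - α))]
        apply mul_le_mul_of_nonneg_left _ (by nlinarith : (0:ℝ) ≤ γ * (1 - α))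
        calc |∑ s', P s a s' * ((⨆ a' : A, q1 s' a') - (⨆ a' : A, q2 s' a'))|
            ≤ ∑ s', |P s a s' * ((⨆ a' : A, q1 s' a') - (⨆ a' : A, q2 s' a'))| :=
              Finset.abs_sum_le_sum_abs _ _
          _ ≤ ∑ s', P s a s' * ‖q1 - q2‖ := by
              apply Finset.sum_le_sum
              intro s' _
              rw [abs_mul, abs_of_nonneg (hPpos s')]
              exact mul_le_mul_of_nonneg_left (hsupb s') (hPpos s')
          _ = ‖q1 - q2‖ := by rw [← Finset.sum_mul, hPsum, one_mul]
      have b2 : |γ * α * ∑ s', P s a s' * ((∑ a', π0 s' a' * q1 s' a') - ∑ a', π0 s' a' * q2 s' a')|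
          ≤ γ * α * ‖q1 - q2‖ := by
        rw [abs_mul, abs_of_nonneg (by positivity : (0:ℝ) ≤ γ * α)]
        apply mul_le_mul_of_nonneg_left _ (by positivity : (0:ℝ) ≤ γ * α)
        calc |∑ s', P s a s' * ((∑ a', π0 s' a' * q1 s' a') - ∑ a', π0 s' a' * q2 s' a')|
            ≤ ∑ s', |P s a s' * ((∑ a', π0 s' a' * q1 s' a') - ∑ a', π0 s' a' * q2 s' a')| :=
              Finset.abs_sum_le_sum_abs _ _
          _ ≤ ∑ s', P s a s' * ‖q1 - q2‖ := by
              apply Finset.sum_le_sum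
              intro s' _
              rw [abs_mul, abs_of_nonneg (hPpos s')]
              exact mul_le_mul_of_nonneg_left (hpolb s') (hPpos s')
          _ = ‖q1 - q2‖ := by rw [← Finset.sum_mul, hPsum, one_mul]
      calc _ ≤ _ + _ := abs_add_le _ _
        _ ≤ γ * (1 - α) * ‖q1 - q2‖ + γ * α * ‖q1 - q2‖ := add_le_add b1 b2
        _ = γ * ‖q1 - q2‖ := by ring
    simpa using key
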